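/- Let R = k[[x,y,z]]/(xy) and J = (z). Then, using Der_k(R) = R⟨x∂_x, y∂_y, ∂_z⟩, the essential singular locus satisfies Sing_1(J) = R, while the classical singular ideal Fitt_1(Ω^1_{R/J}) = (x, y, z) ⊊ R; thus for non-regular ambient rings the essential singular locus can be strictly larger than the Fitting-ideal singular locus. -/

import Mathlib

set_option synthInstance.maxHeartbeats 1000000
set_option maxHeartbeats 1000000
set_option linter.unusedSectionVars false

/-- The `i`-th Fitting ideal of a module `M`: the ideal generated by the
`(n−i) × (n−i)` minors of relation matrices, over all finite presentations
`π : R^n ↠ M` (independent of the presentation for finitely generated modules). -/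
def fittingIdeal (R : Type*) [CommRing R] (M : Type*) [AddCommGroup M] [Module R M]
    (i : ℕ) : Ideal R :=
  ⨆ (n : ℕ) (π : (Fin n → R) →ₗ[R] M) (_ : Function.Surjective π),
    Ideal.span { x | ∃ v : Fin (n - i) → Fin n → R,
      (∀ l, π (v l) = 0) ∧
        ∃ r : Fin (n - i) → Fin n,
          x = (Matrix.of fun a b : Fin (n - i) => v a (r b)).det }

section AuxDeriv
open MvPowerSeries Finsupp

noncomputable def e2 : Fin 3 →₀ ℕ := Finsupp.single 2 1

theorem e2_apply2 : e2 2 = 1 := by simp [e2]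
theorem e2_le {p : Fin 3 →₀ ℕ} (h : p 2 ≠ 0) : e2 ≤ p := by
  rw [e2, Finsupp.single_le_iff]; omega

variable {k : Type*} [Field k] [CharZero k]

theorem claim1 (f g : MvPowerSeries (Fin 3) k) (d : Fin 3 →₀ ℕ) :
    ∑ pq ∈ Finset.HasAntidiagonal.antidiagonal (d + e2),
      ((pq.1 2 : ℕ) : k) * (MvPowerSeries.coeff pq.1 f * MvPowerSeries.coeff pq.2 g)
    = ∑ pq ∈ Finset.HasAntidiagonal.antidiagonal d,
      ((pq.1 2 + 1 : ℕ) : k) * (MvPowerSeries.coeff (pq.1 + e2) f * MvPowerSeries.coeff pq.2 g) := by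
  rw [← Finset.sum_filter_of_ne (p := fun pq : (Fin 3 →₀ ℕ) × (Fin 3 →₀ ℕ) => pq.1 2 ≠ 0)
    (by intro x hx hfx h0; apply hfx; rw [h0]; simp)]
  refine Finset.sum_nbij' (i := fun pq => (pq.1 - e2, pq.2))
    (j := fun pq => (pq.1 + e2, pq.2)) ?_ ?_ ?_ ?_ ?_
  · rintro ⟨p, q⟩ hpq
    simp only [Finset.mem_filter, Finset.HasAntidiagonal.mem_antidiagonal] at hpq ⊢
    obtain ⟨hsum, hne⟩ := hpq
    have hle : e2 ≤ p := e2_le hne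
    have : p - e2 + q + e2 = d + e2 := by
      rw [add_right_comm, tsub_add_cancel_of_le hle, hsum]
    exact add_right_cancel this
  · rintro ⟨p, q⟩ hpq
    simp only [Finset.mem_filter, Finset.HasAntidiagonal.mem_antidiagonal] at hpq ⊢
    refine ⟨by rw [add_right_comm, hpq], ?_⟩
    show (p + e2 : Fin 3 →₀ ℕ) 2 ≠ 0
    rw [Finsupp.add_apply, e2_apply2]; omega
  · rintro ⟨p, q⟩ hpq
    simp only [Finset.mem_filter, Finset.HasAntidiagonal.mem_antidiagonal] at hpq
    have hle : e2 ≤ p := e2_le hpq.2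
    simp [tsub_add_cancel_of_le hle]
  · rintro ⟨p, q⟩ hpq
    simp
  · rintro ⟨p, q⟩ hpq
    simp only [Finset.mem_filter, Finset.HasAntidiagonal.mem_antidiagonal] at hpq
    obtain ⟨hsum, hne⟩ := hpq
    have hle : e2 ≤ p := e2_le hne
    have h1 : (p - e2 : Fin 3 →₀ ℕ) 2 + 1 = p 2 := by
      rw [Finsupp.tsub_apply, e2_apply2]; omega
    simp only
    rw [h1, tsub_add_cancel_of_le hle]

theorem sum_antidiagonal_swap (n : Fin 3 →₀ ℕ) (F : (Fin 3 →₀ ℕ) × (Fin 3 →₀ ℕ) → k) :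
    ∑ pq ∈ Finset.HasAntidiagonal.antidiagonal n, F pq = ∑ pq ∈ Finset.HasAntidiagonal.antidiagonal n, F pq.swap := by
  refine Finset.sum_nbij' (i := Prod.swap) (j := Prod.swap) ?_ ?_ ?_ ?_ ?_ <;>
    rintro ⟨p, q⟩ hpq <;>
    simp_all [Finset.HasAntidiagonal.mem_antidiagonal, add_comm]

noncomputable def pd (f : MvPowerSeries (Fin 3) k) : MvPowerSeries (Fin 3) k :=
  fun d => ((d 2 + 1 : ℕ) : k) * MvPowerSeries.coeff (d + e2) f

theorem coeff_pd (f : MvPowerSeries (Fin 3) k) (d : Fin 3 →₀ ℕ) :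
    MvPowerSeries.coeff d (pd f) = ((d 2 + 1 : ℕ) : k) * MvPowerSeries.coeff (d + e2) f := rfl

theorem pd_mul (f g : MvPowerSeries (Fin 3) k) : pd (f * g) = pd f * g + f * pd g := by
  ext d
  rw [map_add, coeff_pd, MvPowerSeries.coeff_mul, MvPowerSeries.coeff_mul,
    MvPowerSeries.coeff_mul, Finset.mul_sum]
  have step1 : ∑ pq ∈ Finset.HasAntidiagonal.antidiagonal (d + e2),
      ((d 2 + 1 : ℕ) : k) * (MvPowerSeries.coeff pq.1 f * MvPowerSeries.coeff pq.2 g)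
      = ∑ pq ∈ Finset.HasAntidiagonal.antidiagonal (d + e2),
        (((pq.1 2 : ℕ) : k) * (MvPowerSeries.coeff pq.1 f * MvPowerSeries.coeff pq.2 g)
        + ((pq.2 2 : ℕ) : k) * (MvPowerSeries.coeff pq.1 f * MvPowerSeries.coeff pq.2 g)) := by
    refine Finset.sum_congr rfl ?_
    rintro ⟨p, q⟩ hpq
    rw [Finset.HasAntidiagonal.mem_antidiagonal] at hpq
    have h2 : p 2 + q 2 = d 2 + 1 := by
      have := DFunLike.congr_fun hpq 2
      simpa [e2] using this
    rw [← add_mul, ← Nat.cast_add, h2]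
  rw [step1, Finset.sum_add_distrib]
  congr 1
  · rw [claim1]
    refine Finset.sum_congr rfl ?_
    rintro ⟨p, q⟩ _
    rw [coeff_pd, mul_assoc]
  · rw [sum_antidiagonal_swap (d + e2)
      (fun pq => ((pq.2 2 : ℕ) : k) * (MvPowerSeries.coeff pq.1 f * MvPowerSeries.coeff pq.2 g))]
    simp only [Prod.fst_swap, Prod.snd_swap]
    have : ∑ pq ∈ Finset.HasAntidiagonal.antidiagonal (d + e2),
        ((pq.1 2 : ℕ) : k) * (MvPowerSeries.coeff pq.2 f * MvPowerSeries.coeff pq.1 g)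
        = ∑ pq ∈ Finset.HasAntidiagonal.antidiagonal (d + e2),
        ((pq.1 2 : ℕ) : k) * (MvPowerSeries.coeff pq.1 g * MvPowerSeries.coeff pq.2 f) := by
      refine Finset.sum_congr rfl ?_; rintro ⟨p, q⟩ _; ring
    rw [this, claim1 g f d, sum_antidiagonal_swap d
      (fun pq => MvPowerSeries.coeff pq.1 f * MvPowerSeries.coeff pq.2 (pd g))]
    refine Finset.sum_congr rfl ?_
    rintro ⟨p, q⟩ _
    simp only [Prod.fst_swap, Prod.snd_swap, coeff_pd]
    ring

theorem pd_add (f g : MvPowerSeries (Fin 3) k) : pd (f + g) = pd f + pd g := by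
  ext d; simp [coeff_pd, map_add, mul_add]

theorem pd_smul (c : k) (f : MvPowerSeries (Fin 3) k) : pd (c • f) = c • pd f := by
  ext d; simp [coeff_pd, MvPowerSeries.coeff_smul]; ring

theorem pd_one : pd (1 : MvPowerSeries (Fin 3) k) = 0 := by
  ext d
  rw [coeff_pd, MvPowerSeries.coeff_one, if_neg, mul_zero, map_zero]
  intro h
  have := DFunLike.congr_fun h 2
  simp [e2] at this

theorem pd_X0 : pd (MvPowerSeries.X 0 : MvPowerSeries (Fin 3) k) = 0 := by
  ext d
  rw [coeff_pd, MvPowerSeries.coeff_X, if_neg, mul_zero, map_zero]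
  intro h
  have := DFunLike.congr_fun h 2
  simp [e2] at this

theorem pd_X1 : pd (MvPowerSeries.X 1 : MvPowerSeries (Fin 3) k) = 0 := by
  ext d
  rw [coeff_pd, MvPowerSeries.coeff_X, if_neg, mul_zero, map_zero]
  intro h
  have := DFunLike.congr_fun h 2
  simp [e2] at this

theorem pd_X2 : pd (MvPowerSeries.X 2 : MvPowerSeries (Fin 3) k) = 1 := by
  ext d
  rw [coeff_pd, MvPowerSeries.coeff_X, MvPowerSeries.coeff_one]
  by_cases hd : d = 0
  · subst hd; simp [e2]
  · rw [if_neg, if_neg hd, mul_zero]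
    intro h
    apply hd
    have : d + e2 = 0 + e2 := by simpa [e2] using h
    exact add_right_cancel this

theorem pd_mem {f : MvPowerSeries (Fin 3) k}
    (h : f ∈ Ideal.span {(MvPowerSeries.X 0 : MvPowerSeries (Fin 3) k) * MvPowerSeries.X 1}) :
    pd f ∈ Ideal.span {(MvPowerSeries.X 0 : MvPowerSeries (Fin 3) k) * MvPowerSeries.X 1} := by
  rw [Ideal.mem_span_singleton'] at h ⊢
  obtain ⟨c, rfl⟩ := h
  refine ⟨pd c, ?_⟩
  rw [pd_mul, pd_mul, pd_X0, pd_X1]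
  ring

theorem pd_sub (f g : MvPowerSeries (Fin 3) k) : pd (f - g) = pd f - pd g := by
  have h := pd_add (f - g) g
  rw [sub_add_cancel] at h
  rw [h]; ring


theorem mk_add' (f g : MvPowerSeries (Fin 3) k) :
    Ideal.Quotient.mk (Ideal.span {(MvPowerSeries.X 0 : MvPowerSeries (Fin 3) k) * MvPowerSeries.X 1}) f
      + Ideal.Quotient.mk (Ideal.span {(MvPowerSeries.X 0 : MvPowerSeries (Fin 3) k) * MvPowerSeries.X 1}) g
    = Ideal.Quotient.mk (Ideal.span {(MvPowerSeries.X 0 : MvPowerSeries (Fin 3) k) * MvPowerSeries.X 1}) (f + g) :=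
  (map_add _ f g).symm

theorem mk_mul' (f g : MvPowerSeries (Fin 3) k) :
    Ideal.Quotient.mk (Ideal.span {(MvPowerSeries.X 0 : MvPowerSeries (Fin 3) k) * MvPowerSeries.X 1}) f
      * Ideal.Quotient.mk (Ideal.span {(MvPowerSeries.X 0 : MvPowerSeries (Fin 3) k) * MvPowerSeries.X 1}) g
    = Ideal.Quotient.mk (Ideal.span {(MvPowerSeries.X 0 : MvPowerSeries (Fin 3) k) * MvPowerSeries.X 1}) (f * g) :=
  (map_mul _ f g).symm

theorem mk_smul' (c : k) (f : MvPowerSeries (Fin 3) k) :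
    c • Ideal.Quotient.mk (Ideal.span {(MvPowerSeries.X 0 : MvPowerSeries (Fin 3) k) * MvPowerSeries.X 1}) f
    = Ideal.Quotient.mk (Ideal.span {(MvPowerSeries.X 0 : MvPowerSeries (Fin 3) k) * MvPowerSeries.X 1}) (c • f) := by
  rw [← Ideal.Quotient.mkₐ_eq_mk k, map_smul]

noncomputable def DzR (k : Type*) [Field k] [CharZero k] :
    Derivation k
      (MvPowerSeries (Fin 3) k ⧸
        (Ideal.span {(MvPowerSeries.X 0 : MvPowerSeries (Fin 3) k) * MvPowerSeries.X 1}))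
      (MvPowerSeries (Fin 3) k ⧸
        (Ideal.span {(MvPowerSeries.X 0 : MvPowerSeries (Fin 3) k) * MvPowerSeries.X 1})) where
  toFun a := Quotient.liftOn' a
    (fun f => Ideal.Quotient.mk
      (Ideal.span {(MvPowerSeries.X 0 : MvPowerSeries (Fin 3) k) * MvPowerSeries.X 1}) (pd f))
    (by
      intro f g hfg
      have hmem : f - g ∈
          Ideal.span {(MvPowerSeries.X 0 : MvPowerSeries (Fin 3) k) * MvPowerSeries.X 1} := by
        rwa [← Submodule.quotientRel_def]
      rw [Ideal.Quotient.eq, ← pd_sub]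
      exact pd_mem hmem)
  map_add' a b := by
    obtain ⟨f, rfl⟩ := Ideal.Quotient.mk_surjective a
    obtain ⟨g, rfl⟩ := Ideal.Quotient.mk_surjective b
    rw [mk_add']
    show Ideal.Quotient.mk _ (pd (f + g)) = _
    rw [pd_add, ← mk_add']
    rfl
  map_smul' c a := by
    obtain ⟨f, rfl⟩ := Ideal.Quotient.mk_surjective a
    rw [mk_smul']
    show Ideal.Quotient.mk _ (pd (c • f)) = c • Ideal.Quotient.mk _ (pd f)
    rw [pd_smul, mk_smul']
  map_one_eq_zero' := by
    show Ideal.Quotient.mk _ (pd (1 : MvPowerSeries (Fin 3) k)) = 0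
    rw [pd_one, map_zero]
  leibniz' a b := by
    refine Quotient.inductionOn₂' a b (fun f g => ?_)
    show Ideal.Quotient.mk _ (pd (f * g))
      = Ideal.Quotient.mk _ f • Ideal.Quotient.mk _ (pd g)
        + Ideal.Quotient.mk _ g • Ideal.Quotient.mk _ (pd f)
    rw [smul_eq_mul, smul_eq_mul, mk_mul', mk_mul', mk_add', pd_mul]
    ring_nf

theorem DzR_mk (f : MvPowerSeries (Fin 3) k) :
    DzR k (Ideal.Quotient.mk
      (Ideal.span {(MvPowerSeries.X 0 : MvPowerSeries (Fin 3) k) * MvPowerSeries.X 1}) f)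
    = Ideal.Quotient.mk _ (pd f) := rfl

theorem DzR_z : DzR k (Ideal.Quotient.mk
      (Ideal.span {(MvPowerSeries.X 0 : MvPowerSeries (Fin 3) k) * MvPowerSeries.X 1})
      (MvPowerSeries.X 2)) = 1 := by
  rw [DzR_mk, pd_X2, map_one]

end AuxDeriv

section AuxFitt
open Matrix

theorem fitt_lower {S : Type*} [CommRing S] (w : Fin 2 → S) (i : Fin 2) :
    w i ∈ fittingIdeal S ((Fin 2 → S) ⧸ Submodule.span S ({w} : Set (Fin 2 → S))) 1 := by
  set N := Submodule.span S ({w} : Set (Fin 2 → S))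
  have hle : Ideal.span { x | ∃ v : Fin (2 - 1) → Fin 2 → S,
      (∀ l, N.mkQ (v l) = 0) ∧
        ∃ r : Fin (2 - 1) → Fin 2,
          x = (Matrix.of fun a b : Fin (2 - 1) => v a (r b)).det }
      ≤ fittingIdeal S ((Fin 2 → S) ⧸ N) 1 := by
    refine le_iSup_of_le 2 (le_iSup_of_le N.mkQ ?_)
    exact le_iSup (fun _ : Function.Surjective N.mkQ => Ideal.span _) N.mkQ_surjective
  refine hle (Ideal.subset_span ?_)
  refine ⟨fun _ => w, ?_, fun _ => i, ?_⟩
  · intro l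
    rw [Submodule.mkQ_apply, Submodule.Quotient.mk_eq_zero]
    exact Submodule.mem_span_singleton_self w
  · rw [Matrix.det_fin_one]
    rfl

theorem fitt_upper {S km : Type*} [CommRing S] [Field km] (ε : S →+* km)
    (hε : Function.Surjective ε) (w : Fin 2 → S) (hw : ∀ i, ε (w i) = 0) :
    fittingIdeal S ((Fin 2 → S) ⧸ Submodule.span S ({w} : Set (Fin 2 → S))) 1
      ≤ RingHom.ker ε := by
  letI : Module S (Fin 2 → km) := Module.compHom _ ε
  have hsmul : ∀ (s : S) (u : Fin 2 → km), s • u = ε s • u := fun s u => rfl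
  let Φ₀ : (Fin 2 → S) →ₗ[S] (Fin 2 → km) :=
    { toFun := fun u i => ε (u i)
      map_add' := by intro u v; funext i; simp
      map_smul' := by intro s u; funext i; show ε (s * u i) = ε s * ε (u i); rw [_root_.map_mul] }
  have hΦ₀ : Submodule.span S ({w} : Set (Fin 2 → S)) ≤ LinearMap.ker Φ₀ := by
    rw [Submodule.span_le, Set.singleton_subset_iff]
    show (fun i => ε (w i)) = 0
    funext i; exact hw i
  set N := Submodule.span S ({w} : Set (Fin 2 → S))
  let Φ := N.liftQ Φ₀ hΦ₀
  have hΦsurj : Function.Surjective Φ := by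
    intro c
    choose s hs using fun i => hε (c i)
    exact ⟨N.mkQ s, by funext i; exact hs i⟩
  refine iSup_le fun n => iSup_le fun π => iSup_le fun hπ => ?_
  rw [Ideal.span_le]
  rintro t ⟨v, hv, r, rfl⟩
  let ψ : (Fin n → S) →ₗ[S] (Fin 2 → km) := Φ.comp π
  let M : Matrix (Fin n) (Fin 2) km := Matrix.of fun j i => ψ (Pi.single j 1) i
  let T := M.vecMulLinear
  have key : ∀ s : Fin n → S, ψ s = T (fun j => ε (s j)) := by
    intro s
    conv_lhs => rw [← Finset.univ_sum_single s]
    rw [map_sum]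
    funext i
    rw [Finset.sum_apply, Matrix.vecMulLinear_apply]
    show _ = ∑ j, ε (s j) * M j i
    refine Finset.sum_congr rfl fun j _ => ?_
    have h1 : Pi.single j (s j) = (s j • (Pi.single j 1 : Fin n → S)) := by
      funext m
      by_cases hm : m = j
      · subst hm; simp
      · simp [Pi.single_apply, Ne.symm hm]
    rw [h1, _root_.map_smul]
    show (ε (s j) • ψ (Pi.single j 1)) i = _
    simp [M]
  have hTsurj : Function.Surjective T := by
    intro c
    obtain ⟨o, ho⟩ := hΦsurj c
    obtain ⟨q, hq⟩ := hπ o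
    have hψ : ψ q = c := by show Φ (π q) = c; rw [hq, ho]
    exact ⟨fun j => ε (q j), by rw [← key q, hψ]⟩
  have hker : ∀ l, T (fun j => ε (v l j)) = 0 := by
    intro l
    rw [← key (v l)]
    show Φ (π (v l)) = 0
    rw [hv l, map_zero]
  rw [SetLike.mem_coe, RingHom.mem_ker, RingHom.map_det]
  by_contra hA
  set A : Matrix (Fin (n - 1)) (Fin (n - 1)) km := (Matrix.of fun a b => v a (r b)).map ε with hAdef
  let wfam : Fin (n - 1) → (Fin n → km) := fun l j => ε (v l j)
  have hli : LinearIndependent km wfam := by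
    rw [Fintype.linearIndependent_iff]
    intro g hg
    have hvm : g ᵥ* A = 0 := by
      funext b
      have := congr_fun hg (r b)
      simp only [Finset.sum_apply, Pi.smul_apply, smul_eq_mul, Pi.zero_apply] at this
      simpa [Matrix.vecMul, dotProduct, A, wfam, Matrix.map_apply] using this
    have hunit : IsUnit A.det := isUnit_iff_ne_zero.mpr hA
    have : g = (g ᵥ* A) ᵥ* A⁻¹ := by
      rw [Matrix.vecMul_vecMul, Matrix.mul_nonsing_inv A hunit, Matrix.vecMul_one]
    rw [hvm, Matrix.zero_vecMul] at this
    intro i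
    rw [this]; rfl
  let wker : Fin (n - 1) → ↥(LinearMap.ker T) := fun l => ⟨wfam l, LinearMap.mem_ker.mpr (hker l)⟩
  have hli2 : LinearIndependent km wker := by
    apply LinearIndependent.of_comp (LinearMap.ker T).subtype
    exact hli
  have h1 : n - 1 ≤ Module.finrank km ↥(LinearMap.ker T) := by
    simpa using hli2.fintype_card_le_finrank
  have h2 : Module.finrank km ↥(LinearMap.range T) + Module.finrank km ↥(LinearMap.ker T) = n := by
    rw [LinearMap.finrank_range_add_finrank_ker]
    simp [Module.finrank_pi]
  have h3 : Module.finrank km ↥(LinearMap.range T) = 2 := by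
    rw [LinearMap.range_eq_top.mpr hTsurj]
    rw [finrank_top]
    simp [Module.finrank_pi]
  omega

variable {k : Type*} [Field k]

theorem mem_span_X (f : MvPowerSeries (Fin 3) k)
    (hf : MvPowerSeries.constantCoeff f = 0) :
    f ∈ Ideal.span {(MvPowerSeries.X 0 : MvPowerSeries (Fin 3) k),
      MvPowerSeries.X 1, MvPowerSeries.X 2} := by
  set g0 : MvPowerSeries (Fin 3) k :=
    fun d => if d 0 ≠ 0 then MvPowerSeries.coeff d f else 0 with hg0
  set g1 : MvPowerSeries (Fin 3) k :=
    fun d => if d 0 = 0 ∧ d 1 ≠ 0 then MvPowerSeries.coeff d f else 0 with hg1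
  set g2 : MvPowerSeries (Fin 3) k :=
    fun d => if d 0 = 0 ∧ d 1 = 0 ∧ d 2 ≠ 0 then MvPowerSeries.coeff d f else 0 with hg2
  have hd0 : (MvPowerSeries.X 0 : MvPowerSeries (Fin 3) k) ∣ g0 := by
    rw [MvPowerSeries.X_dvd_iff]
    intro m hm
    show (if m 0 ≠ 0 then MvPowerSeries.coeff m f else 0) = 0
    simp [hm]
  have hd1 : (MvPowerSeries.X 1 : MvPowerSeries (Fin 3) k) ∣ g1 := by
    rw [MvPowerSeries.X_dvd_iff]
    intro m hm
    show (if m 0 = 0 ∧ m 1 ≠ 0 then MvPowerSeries.coeff m f else 0) = 0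
    simp [hm]
  have hd2 : (MvPowerSeries.X 2 : MvPowerSeries (Fin 3) k) ∣ g2 := by
    rw [MvPowerSeries.X_dvd_iff]
    intro m hm
    show (if m 0 = 0 ∧ m 1 = 0 ∧ m 2 ≠ 0 then MvPowerSeries.coeff m f else 0) = 0
    simp [hm]
  have hsum : f = g0 + g1 + g2 := by
    ext d
    rw [map_add, map_add]
    show MvPowerSeries.coeff d f
      = (if d 0 ≠ 0 then MvPowerSeries.coeff d f else 0)
      + (if d 0 = 0 ∧ d 1 ≠ 0 then MvPowerSeries.coeff d f else 0)
      + (if d 0 = 0 ∧ d 1 = 0 ∧ d 2 ≠ 0 then MvPowerSeries.coeff d f else 0)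
    by_cases h0 : d 0 = 0
    · by_cases h1 : d 1 = 0
      · by_cases h2 : d 2 = 0
        · have hd : d = 0 := by
            ext i
            fin_cases i <;> assumption
          subst hd
          have hc : MvPowerSeries.coeff 0 f = 0 := by
            rwa [MvPowerSeries.coeff_zero_eq_constantCoeff]
          simp [hc]
        · simp [h0, h1, h2]
      · simp [h0, h1]
    · simp [h0]
  rw [hsum]
  have hmem : ∀ (u s : MvPowerSeries (Fin 3) k), s ∣ u →
      s ∈ ({(MvPowerSeries.X 0 : MvPowerSeries (Fin 3) k),
        MvPowerSeries.X 1, MvPowerSeries.X 2} : Set (MvPowerSeries (Fin 3) k)) →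
      u ∈ Ideal.span {(MvPowerSeries.X 0 : MvPowerSeries (Fin 3) k),
        MvPowerSeries.X 1, MvPowerSeries.X 2} := by
    intro u s hdvd hs
    obtain ⟨c, rfl⟩ := hdvd
    exact Ideal.mul_mem_right _ _ (Ideal.subset_span hs)
  refine Ideal.add_mem _ (Ideal.add_mem _ ?_ ?_) ?_
  · exact hmem _ _ hd0 (by simp)
  · exact hmem _ _ hd1 (by simp)
  · exact hmem _ _ hd2 (by simp)

end AuxFitt


/-- Let `R = k[[x,y,z]]/(xy)` and `J = (z)`.  Then the essential
singular locus `Sing_1(J) = J + Der_k(R)(z) = R`, while the classical singular ideal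
`Fitt_1(Ω¹_{R/J})` (computed from the presentation
`Ω¹_{R/J} = (R/J)² / ⟨x dy + y dx⟩` in coordinates `dx, dy`) pulls back to
`(x, y, z) ⊊ R`. -/
theorem stmt_18 (k : Type*) [Field k] [CharZero k] :
    let P := MvPowerSeries (Fin 3) k
    let I : Ideal P := Ideal.span {(MvPowerSeries.X 0 : P) * MvPowerSeries.X 1}
    let R := P ⧸ I
    let x : R := Ideal.Quotient.mk I (MvPowerSeries.X 0)
    let y : R := Ideal.Quotient.mk I (MvPowerSeries.X 1)
    let z : R := Ideal.Quotient.mk I (MvPowerSeries.X 2)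
    let J : Ideal R := Ideal.span {z}
    let Sing1 : Ideal R := J ⊔ Ideal.span {r : R | ∃ D : Derivation k R R, r = D z}
    let S := R ⧸ J
    let Ω := (Fin 2 → S) ⧸ Submodule.span S
      ({![Ideal.Quotient.mk J y, Ideal.Quotient.mk J x]} : Set (Fin 2 → S))
    Sing1 = ⊤ ∧
      Ideal.comap (Ideal.Quotient.mk J) (fittingIdeal S Ω 1) = Ideal.span {x, y, z} ∧
      Ideal.span {x, y, z} ≠ (⊤ : Ideal R) := by
  intro P I R x y z J Sing1 S Ω
  -- the residue ring hom χ : R →+* k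
  have hIker : ∀ a ∈ I, MvPowerSeries.constantCoeff a = 0 := by
    intro a ha
    rw [Ideal.mem_span_singleton'] at ha
    obtain ⟨c, rfl⟩ := ha
    simp [MvPowerSeries.constantCoeff_X]
  let χ : R →+* k := Ideal.Quotient.lift I (MvPowerSeries.constantCoeff) hIker
  have hχmk : ∀ f : P, χ (Ideal.Quotient.mk I f) = MvPowerSeries.constantCoeff f :=
    fun f => Ideal.Quotient.lift_mk I _ _
  have hχx : χ x = 0 := by rw [hχmk]; simp [MvPowerSeries.constantCoeff_X]
  have hχy : χ y = 0 := by rw [hχmk]; simp [MvPowerSeries.constantCoeff_X]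
  have hχz : χ z = 0 := by rw [hχmk]; simp [MvPowerSeries.constantCoeff_X]
  have hJker : ∀ a ∈ J, χ a = 0 := by
    intro a ha
    rw [Ideal.mem_span_singleton'] at ha
    obtain ⟨c, rfl⟩ := ha
    rw [map_mul, hχz, mul_zero]
  let ε : S →+* k := Ideal.Quotient.lift J χ hJker
  have hεmk : ∀ a : R, ε (Ideal.Quotient.mk J a) = χ a := fun a => Ideal.Quotient.lift_mk J _ _
  refine ⟨?_, ?_, ?_⟩
  · -- Sing1 = ⊤
    rw [Ideal.eq_top_iff_one]
    refine Submodule.mem_sup_right (Ideal.subset_span ?_)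
    exact ⟨DzR k, DzR_z.symm⟩
  · -- the Fitting ideal computation
    have hεsurj : Function.Surjective ε := by
      intro c
      refine ⟨Ideal.Quotient.mk J (Ideal.Quotient.mk I (MvPowerSeries.C c)), ?_⟩
      rw [hεmk, hχmk, MvPowerSeries.constantCoeff_C]
    have hw : ∀ i : Fin 2,
        ε ((![Ideal.Quotient.mk J y, Ideal.Quotient.mk J x] : Fin 2 → S) i) = 0 := by
      intro i
      fin_cases i
      · show ε (Ideal.Quotient.mk J y) = 0
        rw [hεmk, hχy]
      · show ε (Ideal.Quotient.mk J x) = 0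
        rw [hεmk, hχx]
    apply le_antisymm
    · intro a ha
      rw [Ideal.mem_comap] at ha
      have h2 : Ideal.Quotient.mk J a ∈ RingHom.ker ε :=
        fitt_upper ε hεsurj (![Ideal.Quotient.mk J y, Ideal.Quotient.mk J x]) hw ha
      rw [RingHom.mem_ker, hεmk] at h2
      obtain ⟨f, rfl⟩ := Ideal.Quotient.mk_surjective a
      rw [hχmk] at h2
      have h3 := mem_span_X f h2
      have h4 : Ideal.Quotient.mk I f ∈
          Ideal.map (Ideal.Quotient.mk I) (Ideal.span {(MvPowerSeries.X 0 : P),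
            MvPowerSeries.X 1, MvPowerSeries.X 2}) := Ideal.mem_map_of_mem _ h3
      rw [Ideal.map_span, Set.image_insert_eq, Set.image_insert_eq, Set.image_singleton] at h4
      exact h4
    · rw [Ideal.span_le]
      intro t ht
      simp only [Set.mem_insert_iff, Set.mem_singleton_iff] at ht
      rcases ht with rfl | rfl | rfl
      · rw [SetLike.mem_coe, Ideal.mem_comap]
        have := fitt_lower (![Ideal.Quotient.mk J y, Ideal.Quotient.mk J x]) 1
        simpa using this
      · rw [SetLike.mem_coe, Ideal.mem_comap]
        have := fitt_lower (![Ideal.Quotient.mk J y, Ideal.Quotient.mk J x]) 0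
        simpa using this
      · rw [SetLike.mem_coe, Ideal.mem_comap]
        have hz0 : Ideal.Quotient.mk J z = 0 :=
          Ideal.Quotient.eq_zero_iff_mem.mpr (Ideal.subset_span rfl)
        rw [hz0]
        exact zero_mem _
  · -- (x, y, z) ≠ ⊤
    intro htop
    have h1 : (1 : R) ∈ Ideal.span ({x, y, z} : Set R) := htop ▸ Submodule.mem_top
    have hle : Ideal.span ({x, y, z} : Set R) ≤ RingHom.ker χ := by
      rw [Ideal.span_le]
      intro t ht
      simp only [Set.mem_insert_iff, Set.mem_singleton_iff] at ht
      rcases ht with rfl | rfl | rfl <;>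
        simp only [SetLike.mem_coe, RingHom.mem_ker, hχx, hχy, hχz]
    have := hle h1
    rw [RingHom.mem_ker, map_one] at this
    exact one_ne_zero this
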